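/- If a weak majority (at least half) of the voters in a profile share the same ranking r, then r is a Kemeny ranking of the profile. -/

import Mathlib

open Finset

/-- A ranking over `m` candidates: `r c` is the position of candidate `c`
(position `0` = most preferred). -/
abbrev Ranking (m : ℕ) := Equiv.Perm (Fin m)

/-- Voter with ranking `r` prefers `a` to `b`. -/
def Prefers {m : ℕ} (r : Ranking m) (a b : Fin m) : Prop := r a < r b

/-- A ranking is single-peaked w.r.t. the axis `c_0 ▷ c_1 ▷ ... ▷ c_{m-1}`. -/
def IsSinglePeaked {m : ℕ} (r : Ranking m) : Prop :=
  ∀ i j k : Fin m, i < j → j < k →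
    (Prefers r i j → Prefers r j k) ∧ (Prefers r k j → Prefers r j i)

/-- A profile is single-peaked if all its rankings are. -/
def SPProfile {V : Type*} {m : ℕ} (P : V → Ranking m) : Prop :=
  ∀ v, IsSinglePeaked (P v)

/-- Popularity margin of `a` over `b`. -/
noncomputable def pop {V : Type*} [Fintype V] {m : ℕ} (P : V → Ranking m)
    (a b : Fin m) : ℤ :=
  (Nat.card {v : V // Prefers (P v) a b} : ℤ) -
    (Nat.card {v : V // Prefers (P v) b a} : ℤ)

/-- Minimax Condorcet score of candidate `c`: worst defeat margin. -/
noncomputable def mmc {V : Type*} [Fintype V] {m : ℕ} (P : V → Ranking m)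
    (c : Fin m) : WithBot ℤ :=
  (Finset.univ.erase c).sup (fun c' => ((pop P c' c : ℤ) : WithBot ℤ))

/-- Kendall's tau distance between two rankings. -/
noncomputable def kt {m : ℕ} (r s : Ranking m) : ℕ :=
  Nat.card {p : Fin m × Fin m //
    p.1 < p.2 ∧ ¬ (Prefers r p.1 p.2 ↔ Prefers s p.1 p.2)}

/-- Kemeny score of ranking `r` w.r.t. profile `P`. -/
noncomputable def ktSum {V : Type*} [Fintype V] {m : ℕ} (r : Ranking m)
    (P : V → Ranking m) : ℕ :=
  ∑ v, kt r (P v)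

/-- The peak (top candidate) of a ranking. -/
def peak {m : ℕ} (r : Ranking (m + 1)) : Fin (m + 1) := r.symm 0

section ktLemmas
open scoped Classical
variable {m : ℕ}

private lemma kt_card (r s : Ranking m) :
    kt r s = (univ.filter (fun p : Fin m × Fin m =>
      p.1 < p.2 ∧ ¬ (Prefers r p.1 p.2 ↔ Prefers s p.1 p.2))).card := by
  rw [kt, Nat.card_eq_fintype_card, Fintype.card_subtype]

private lemma kt_self (r : Ranking m) : kt r r = 0 := by
  rw [kt_card]
  convert Finset.card_empty
  ext p
  simp

private lemma kt_comm (r s : Ranking m) : kt r s = kt s r := by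
  rw [kt_card, kt_card]
  congr 1
  ext p
  simp only [mem_filter, mem_univ, true_and]
  tauto

private lemma kt_triangle (r s t : Ranking m) : kt r t ≤ kt r s + kt s t := by
  rw [kt_card, kt_card, kt_card]
  refine le_trans (card_le_card ?_) (card_union_le _ _)
  intro p hp
  simp only [mem_filter, mem_union, mem_univ, true_and] at *
  tauto

end ktLemmas

/-- if a weak majority of the voters share the same ranking `r`,
then `r` is a Kemeny ranking of the profile. -/
theorem stmt_16 {V : Type*} [Fintype V] {m : ℕ} (P : V → Ranking m)
    (r : Ranking m)
    (hmaj : Fintype.card V ≤ 2 * Nat.card {v : V // P v = r}) :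
    ∀ s : Ranking m, ktSum r P ≤ ktSum s P := by
  classical
  intro s
  set A := univ.filter (fun v => P v = r) with hA
  have hAcard : Nat.card {v : V // P v = r} = A.card := by
    rw [Nat.card_eq_fintype_card, Fintype.card_subtype]
  have hn : A.card + Aᶜ.card = Fintype.card V := Finset.card_add_card_compl A
  have hsplit : Aᶜ.card ≤ A.card := by
    rw [hAcard] at hmaj; omega
  have h2 : ktSum r P ≤ Aᶜ.card * kt r s + ∑ v ∈ Aᶜ, kt s (P v) := by
    rw [ktSum, ← Finset.sum_add_sum_compl A]
    have hz : ∑ v ∈ A, kt r (P v) = 0 := Finset.sum_eq_zero (fun v hv => by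
      rw [hA, mem_filter] at hv
      rw [hv.2, kt_self])
    rw [hz, zero_add]
    calc ∑ v ∈ Aᶜ, kt r (P v) ≤ ∑ v ∈ Aᶜ, (kt r s + kt s (P v)) :=
          Finset.sum_le_sum (fun v _ => kt_triangle r s (P v))
      _ = Aᶜ.card * kt r s + ∑ v ∈ Aᶜ, kt s (P v) := by
          rw [Finset.sum_add_distrib, Finset.sum_const, smul_eq_mul]
  have h3 : A.card * kt r s + ∑ v ∈ Aᶜ, kt s (P v) ≤ ktSum s P := by
    rw [ktSum, ← Finset.sum_add_sum_compl A]
    have heq : ∀ v ∈ A, kt s (P v) = kt r s := by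
      intro v hv
      rw [hA, mem_filter] at hv
      rw [hv.2, kt_comm]
    have hz : ∑ v ∈ A, kt s (P v) = A.card * kt r s := by
      rw [Finset.sum_congr rfl heq, Finset.sum_const, smul_eq_mul]
    rw [hz]
  refine le_trans h2 (le_trans ?_ h3)
  exact Nat.add_le_add_right (Nat.mul_le_mul_right _ hsplit) _
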